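/- If psol(A,B) = {x} and Ax is a singleton, then dsol(A,B) = Ax. -/
import Mathlib


open Pointwise InnerProductSpace

variable {X : Type*} [NormedAddCommGroup X] [InnerProductSpace ℝ X]

/-- A set-valued operator `A : X ⇉ X` is monotone. -/
def SVMonotone (A : X → Set X) : Prop :=
  ∀ ⦃x y u v : X⦄, u ∈ A x → v ∈ A y → 0 ≤ ⟪x - y, u - v⟫_ℝ

/-- A set-valued operator is maximally monotone. -/
def SVMaxMonotone (A : X → Set X) : Prop :=
  SVMonotone A ∧ ∀ x u : X, (∀ y v, v ∈ A y → 0 ≤ ⟪x - y, u - v⟫_ℝ) → u ∈ A x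

/-- Set-valued inverse. -/
def SVInv (A : X → Set X) : X → Set X := fun u => {x | u ∈ A x}

/-- `B^∨ = (−Id) ∘ B ∘ (−Id)`. -/
def SVVee (B : X → Set X) : X → Set X := fun x => -(B (-x))

/-- `B^{−∨} = (B⁻¹)^∨`. -/
def SVInvVee (B : X → Set X) : X → Set X := SVVee (SVInv B)

/-- Primal Attouch–Théra solutions: `zer (A + B)`. -/
def psol (A B : X → Set X) : Set X := {x | (0 : X) ∈ A x + B x}

/-- Dual Attouch–Théra solutions: `zer (A⁻¹ + B^{−∨})`. -/
def dsol (A B : X → Set X) : Set X := {y | (0 : X) ∈ SVInv A y + SVInvVee B y}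

/-- If `psol (A, B) = {x}` and `A x` is a singleton, then `dsol (A, B) = A x`. -/
theorem dsol_eq_Ax (A B : X → Set X)
    (hA : SVMaxMonotone A) (hB : SVMaxMonotone B) (x : X)
    (hx : psol A B = {x}) (hsingle : ∃ a : X, A x = {a}) :
    dsol A B = A x := by
  obtain ⟨a, ha⟩ := hsingle
  have hxp : x ∈ psol A B := by rw [hx]; rfl
  obtain ⟨p, hp, q, hq, hpq⟩ := Set.mem_add.mp hxp
  have hpa : p = a := by rw [ha] at hp; exact hp
  have hqa : q = -a := by rw [hpa] at hpq; exact eq_neg_of_add_eq_zero_right hpq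
  ext y
  constructor
  · intro hy
    obtain ⟨u, hu, v, hv, huv⟩ := Set.mem_add.mp hy
    have hv' : -y ∈ B (-v) := by simpa [SVInvVee, SVVee, SVInv] using hv
    have hvu : -v = u := by
      have : v = -u := eq_neg_of_add_eq_zero_right huv
      rw [this, neg_neg]
    rw [hvu] at hv'
    have hupsol : u ∈ psol A B := Set.mem_add.mpr ⟨y, hu, -y, hv', by simp⟩
    rw [hx] at hupsol
    rw [hupsol] at hu
    exact hu
  · intro hy
    refine Set.mem_add.mpr ⟨x, hy, -x, ?_, by simp⟩
    have hya : y = a := by rw [ha] at hy; exact hy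
    have hba : -a ∈ B x := hqa ▸ hq
    simpa [SVInvVee, SVVee, SVInv, hya] using hba
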